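/- Let 𝕜 be a field, k ≥ 2 an integer, and n₁, …, n_k positive integers. Let N_i and N′_i be n_i × n_{i+1} matrices over 𝕜 for i = 1, …, k−1. Then there exist invertible matrices g_i ∈ GL_{n_i}(𝕜) for i = 1, …, k such that N′_i = g_i · N_i · g_{i+1}⁻¹ for all i = 1, …, k−1, if and only if for all indices 1 ≤ j ≤ j′ ≤ k−1 one has rank(N_j · N_{j+1} ⋯ N_{j′}) = rank(N′_j · N′_{j+1} ⋯ N′_{j′}). -/

import Mathlib

open Matrix

/-- `chainProd n N j m` is the product `N_j * N_{j+1} * ⋯ * N_{j+m}` of a chain of matrices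
`N_i : Matrix (Fin (n i)) (Fin (n (i+1))) 𝕜`. -/
def chainProd {𝕜 : Type*} [Field 𝕜] (n : ℕ → ℕ)
    (N : ∀ i : ℕ, Matrix (Fin (n i)) (Fin (n (i + 1))) 𝕜) :
    (j m : ℕ) → Matrix (Fin (n j)) (Fin (n (j + m + 1))) 𝕜
  | j, 0 => N j
  | j, m + 1 => chainProd n N j m * N (j + m + 1)

theorem chainProd_succ {𝕜 : Type*} [Field 𝕜] (n : ℕ → ℕ)
    (N : ∀ i : ℕ, Matrix (Fin (n i)) (Fin (n (i + 1))) 𝕜) (j m : ℕ) :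
    chainProd n N j (m + 1) = chainProd n N j m * N (j + m + 1) := rfl

namespace ChainAux

open LinearMap Submodule Module

universe u v

variable {𝕜 : Type u} [Field 𝕜]

/-- Extension lemma: an intertwining isomorphism defined on a subspace extends to the
whole space, provided the ambient dimensions and the full ranges match. -/
theorem ext_iso {U U' X : Type v} [AddCommGroup U] [Module 𝕜 U] [FiniteDimensional 𝕜 U]
    [AddCommGroup U'] [Module 𝕜 U'] [FiniteDimensional 𝕜 U']
    [AddCommGroup X] [Module 𝕜 X]
    (F : U →ₗ[𝕜] X) (G : U' →ₗ[𝕜] X)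
    (hdim : finrank 𝕜 U = finrank 𝕜 U')
    (hrange : LinearMap.range F = LinearMap.range G)
    (W : Submodule 𝕜 U) (W' : Submodule 𝕜 U')
    (u₀ : W ≃ₗ[𝕜] W') (hu₀ : ∀ x : W, G (u₀ x) = F x) :
    ∃ u : U ≃ₗ[𝕜] U', (∀ x, G (u x) = F x) ∧ (∀ x : W, u x = (u₀ x : U')) := by
  classical
  -- dimensions of the kernels agree
  have hKdim : finrank 𝕜 ↥(LinearMap.ker F) = finrank 𝕜 (LinearMap.ker G) := by
    have h1 := F.finrank_range_add_finrank_ker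
    have h2 := G.finrank_range_add_finrank_ker
    rw [hrange] at h1
    omega
  -- u₀ maps W ⊓ LinearMap.ker F onto W' ⊓ (LinearMap.ker G)
  have hkermap : Submodule.map (u₀ : W →ₗ[𝕜] W') (comap W.subtype (LinearMap.ker F)) = comap W'.subtype (LinearMap.ker G) := by
    ext y
    simp only [Submodule.mem_map, Submodule.mem_comap, Submodule.subtype_apply,
      LinearMap.mem_ker, LinearEquiv.coe_coe]
    constructor
    · rintro ⟨x, hx, rfl⟩
      rw [hu₀ x, hx]
    · intro hy
      refine ⟨u₀.symm y, ?_, u₀.apply_symm_apply y⟩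
      have := (hu₀ (u₀.symm y)).symm
      rw [u₀.apply_symm_apply] at this
      rw [this, hy]
  have hWKdim : finrank 𝕜 ↥(W ⊓ LinearMap.ker F) = finrank 𝕜 ↥(W' ⊓ (LinearMap.ker G)) := by
    have e1 : comap W.subtype (W ⊓ LinearMap.ker F) = comap W.subtype (LinearMap.ker F) := by
      rw [comap_inf, comap_subtype_self, top_inf_eq]
    have e1' : comap W'.subtype (W' ⊓ (LinearMap.ker G)) = comap W'.subtype (LinearMap.ker G) := by
      rw [comap_inf, comap_subtype_self, top_inf_eq]
    calc finrank 𝕜 ↥(W ⊓ LinearMap.ker F)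
        = finrank 𝕜 ↥(comap W.subtype (W ⊓ LinearMap.ker F)) :=
          ((comapSubtypeEquivOfLe inf_le_left).finrank_eq).symm
      _ = finrank 𝕜 ↥(comap W.subtype (LinearMap.ker F)) := by rw [e1]
      _ = finrank 𝕜 ↥(comap W'.subtype (LinearMap.ker G)) := by
          rw [← hkermap]; exact (LinearEquiv.finrank_map_eq u₀ _).symm
      _ = finrank 𝕜 ↥(comap W'.subtype (W' ⊓ (LinearMap.ker G))) := by rw [e1']
      _ = finrank 𝕜 ↥(W' ⊓ (LinearMap.ker G)) := (comapSubtypeEquivOfLe inf_le_left).finrank_eq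
  -- complement A of W ⊓ LinearMap.ker F inside LinearMap.ker F
  obtain ⟨Acap, hAcap⟩ := Submodule.exists_isCompl (comap (LinearMap.ker F).subtype (W ⊓ LinearMap.ker F))
  obtain ⟨Acap', hAcap'⟩ := Submodule.exists_isCompl (comap (LinearMap.ker G).subtype (W' ⊓ (LinearMap.ker G)))
  set A := Submodule.map (LinearMap.ker F).subtype Acap with hA
  set A' := Submodule.map (LinearMap.ker G).subtype Acap' with hA'
  have hAK : A ≤ LinearMap.ker F := map_subtype_le _ _
  have hA'K' : A' ≤ (LinearMap.ker G) := map_subtype_le _ _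
  have hmc : Submodule.map (LinearMap.ker F).subtype (comap (LinearMap.ker F).subtype (W ⊓ LinearMap.ker F)) = W ⊓ LinearMap.ker F := by
    rw [map_comap_subtype]
    exact inf_eq_right.mpr inf_le_right
  have hmc' : Submodule.map (LinearMap.ker G).subtype (comap (LinearMap.ker G).subtype (W' ⊓ (LinearMap.ker G))) = W' ⊓ (LinearMap.ker G) := by
    rw [map_comap_subtype]
    exact inf_eq_right.mpr inf_le_right
  have hA1 : (W ⊓ LinearMap.ker F) ⊓ A = ⊥ := by
    rw [← hmc, hA, ← Submodule.map_inf _ (injective_subtype (LinearMap.ker F)),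
      disjoint_iff.mp hAcap.disjoint, Submodule.map_bot]
  have hA1' : (W' ⊓ (LinearMap.ker G)) ⊓ A' = ⊥ := by
    rw [← hmc', hA', ← Submodule.map_inf _ (injective_subtype (LinearMap.ker G)),
      disjoint_iff.mp hAcap'.disjoint, Submodule.map_bot]
  have hA2 : (W ⊓ LinearMap.ker F) ⊔ A = LinearMap.ker F := by
    rw [← hmc, hA, ← Submodule.map_sup, codisjoint_iff.mp hAcap.codisjoint,
      Submodule.map_top, range_subtype]
  have hA2' : (W' ⊓ (LinearMap.ker G)) ⊔ A' = (LinearMap.ker G) := by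
    rw [← hmc', hA', ← Submodule.map_sup, codisjoint_iff.mp hAcap'.codisjoint,
      Submodule.map_top, range_subtype]
  -- complement B of W ⊔ LinearMap.ker F in U, complement C' of (LinearMap.ker G) in U'
  obtain ⟨B, hBc⟩ := Submodule.exists_isCompl (W ⊔ LinearMap.ker F)
  obtain ⟨C', hC'⟩ := Submodule.exists_isCompl (LinearMap.ker G)
  -- dimension of A equals dimension of A'
  have hAdim : finrank 𝕜 A = finrank 𝕜 A' := by
    have d1 := Submodule.finrank_sup_add_finrank_inf_eq (W ⊓ LinearMap.ker F) A
    have d2 := Submodule.finrank_sup_add_finrank_inf_eq (W' ⊓ (LinearMap.ker G)) A'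
    rw [hA1, hA2, finrank_bot] at d1
    rw [hA1', hA2', finrank_bot] at d2
    omega
  have eA : ↥A ≃ₗ[𝕜] ↥A' :=
    Classical.choice (FiniteDimensional.nonempty_linearEquiv_of_finrank_eq hAdim)
  -- the map from B into C'
  set GC : ↥C' →ₗ[𝕜] X := G.comp C'.subtype with hGC
  have hGCinj : Function.Injective GC := by
    rw [← LinearMap.ker_eq_bot]
    rw [eq_bot_iff]
    intro x hx
    have hx0 : (x : U') ∈ (LinearMap.ker G) := by
      simpa [hGC, LinearMap.mem_ker] using hx
    have : (x : U') = 0 := disjoint_def.mp hC'.disjoint.symm _ x.2 hx0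
    exact Submodule.coe_eq_zero.mp this
  have hGCrange : LinearMap.range GC = LinearMap.range G := by
    rw [hGC, LinearMap.range_comp, range_subtype]
    refine le_antisymm map_le_range ?_
    have : LinearMap.range G = Submodule.map G ((LinearMap.ker G) ⊔ C') := by
      rw [codisjoint_iff.mp hC'.codisjoint, Submodule.map_top]
    rw [this, Submodule.map_sup]
    have hk0 : Submodule.map G (LinearMap.ker G) = ⊥ := by
      rw [eq_bot_iff]
      rintro y ⟨x, hx, rfl⟩
      simpa using hx
    rw [hk0]
    simp
  set eC : ↥C' ≃ₗ[𝕜] ↥(LinearMap.range G) :=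
    (LinearEquiv.ofInjective GC hGCinj).trans (LinearEquiv.ofEq _ _ hGCrange) with heCdef
  have heC : ∀ c : ↥C', ((eC c : X)) = G (c : U') := by
    intro c
    simp [heCdef, hGC]
  set FBr : ↥B →ₗ[𝕜] ↥(LinearMap.range G) :=
    LinearMap.codRestrict (LinearMap.range G) (F.comp B.subtype)
      (fun b => by rw [← hrange]; exact ⟨(b : U), rfl⟩) with hFBr
  set hB : ↥B →ₗ[𝕜] U' := C'.subtype.comp (eC.symm.toLinearMap.comp FBr) with hhB
  have hGhB : ∀ b : ↥B, G (hB b) = F (b : U) := by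
    intro b
    have h1 : G ((eC.symm (FBr b) : U')) = ((eC (eC.symm (FBr b)) : X)) := (heC _).symm
    rw [hhB]
    simp only [LinearMap.comp_apply, Submodule.subtype_apply, LinearEquiv.coe_coe]
    rw [h1, eC.apply_symm_apply]
    simp [hFBr]
  have hhBC : ∀ b : ↥B, hB b ∈ C' := fun b => by
    rw [hhB]
    exact (eC.symm (FBr b)).2
  -- basic lattice facts
  have hWA_bot : W ⊓ A = ⊥ := by
    rw [eq_bot_iff]
    intro x hx
    have : x ∈ (W ⊓ LinearMap.ker F) ⊓ A :=
      ⟨⟨hx.1, hAK hx.2⟩, hx.2⟩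
    rw [hA1] at this
    exact this
  have hWAK : W ⊔ A = W ⊔ LinearMap.ker F := by
    refine le_antisymm (sup_le le_sup_left (hAK.trans le_sup_right)) ?_
    refine sup_le le_sup_left ?_
    rw [← hA2]
    exact sup_le (inf_le_left.trans le_sup_left) le_sup_right
  have hWAB_bot : (W ⊔ A) ⊓ B = ⊥ := by
    rw [hWAK]
    exact disjoint_iff.mp hBc.disjoint
  have hWAB_top : (W ⊔ A) ⊔ B = ⊤ := by
    rw [hWAK]
    exact codisjoint_iff.mp hBc.codisjoint
  -- the three-fold direct sum decomposition
  have hcW : IsCompl W (A ⊔ B) := by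
    constructor
    · rw [disjoint_def]
      intro x hxW hxAB
      obtain ⟨a, ha, b, hb, rfl⟩ := Submodule.mem_sup.mp hxAB
      have hbWA : b ∈ (W ⊔ A) ⊓ B := by
        constructor
        · have : (a + b) - a ∈ W ⊔ A :=
            Submodule.sub_mem _ (Submodule.mem_sup_left hxW) (Submodule.mem_sup_right ha)
          simpa using this
        · exact hb
      rw [hWAB_bot] at hbWA
      have hb0 : b = 0 := hbWA
      subst hb0
      have : a + 0 ∈ W ⊓ A := ⟨hxW, by simpa using ha⟩
      rw [hWA_bot] at this
      simpa using this
    · rw [codisjoint_iff, ← sup_assoc]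
      exact hWAB_top
  have hcA : IsCompl A (W ⊔ B) := by
    constructor
    · rw [disjoint_def]
      intro x hxA hxWB
      obtain ⟨w, hw, b, hb, rfl⟩ := Submodule.mem_sup.mp hxWB
      have hbWA : b ∈ (W ⊔ A) ⊓ B := by
        constructor
        · have : (w + b) - w ∈ W ⊔ A :=
            Submodule.sub_mem _ (Submodule.mem_sup_right hxA) (Submodule.mem_sup_left hw)
          simpa using this
        · exact hb
      rw [hWAB_bot] at hbWA
      have hb0 : b = 0 := hbWA
      subst hb0
      have : w + 0 ∈ W ⊓ A := ⟨by simpa using hw, hxA⟩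
      rw [hWA_bot] at this
      simpa using this
    · rw [codisjoint_iff, sup_left_comm]
      rw [← sup_assoc]
      exact hWAB_top
  have hcB : IsCompl B (W ⊔ A) := by
    constructor
    · rw [disjoint_comm, disjoint_iff]
      exact hWAB_bot
    · rw [codisjoint_iff, sup_comm]
      exact hWAB_top
  set pW := W.projectionOnto (A ⊔ B) hcW with hpW
  set pA := A.projectionOnto (W ⊔ B) hcA with hpA
  set pB := B.projectionOnto (W ⊔ A) hcB with hpB
  have hproj : ∀ (w : W) (a : ↥A) (b : ↥B),
      pW ((w : U) + a + b) = w ∧ pA ((w : U) + a + b) = a ∧ pB ((w : U) + a + b) = b := by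
    intro w a b
    refine ⟨?_, ?_, ?_⟩
    · rw [map_add, map_add]
      rw [Submodule.projectionOnto_apply_left hcW w,
        Submodule.projectionOnto_apply_of_mem_right hcW (Submodule.mem_sup_left a.2),
        Submodule.projectionOnto_apply_of_mem_right hcW (Submodule.mem_sup_right b.2)]
      simp
    · rw [map_add, map_add]
      rw [Submodule.projectionOnto_apply_left hcA a,
        Submodule.projectionOnto_apply_of_mem_right hcA (Submodule.mem_sup_left w.2),
        Submodule.projectionOnto_apply_of_mem_right hcA (Submodule.mem_sup_right b.2)]
      simp
    · rw [map_add, map_add]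
      rw [Submodule.projectionOnto_apply_left hcB b,
        Submodule.projectionOnto_apply_of_mem_right hcB (Submodule.mem_sup_left w.2),
        Submodule.projectionOnto_apply_of_mem_right hcB (Submodule.mem_sup_right a.2)]
      simp
  have hdec : ∀ x : U, ∃ (w : W) (a : ↥A) (b : ↥B), x = (w : U) + a + b := by
    intro x
    have hx : x ∈ (W ⊔ A) ⊔ B := by rw [hWAB_top]; trivial
    obtain ⟨y, hy, b, hb, rfl⟩ := Submodule.mem_sup.mp hx
    obtain ⟨w, hw, a, ha, rfl⟩ := Submodule.mem_sup.mp hy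
    exact ⟨⟨w, hw⟩, ⟨a, ha⟩, ⟨b, hb⟩, rfl⟩
  set ulin : U →ₗ[𝕜] U' :=
    W'.subtype.comp ((u₀ : W →ₗ[𝕜] W').comp pW) +
      A'.subtype.comp ((eA : ↥A →ₗ[𝕜] ↥A').comp pA) + hB.comp pB with hulin_def
  have hulin : ∀ (w : W) (a : ↥A) (b : ↥B),
      ulin ((w : U) + a + b) = ((u₀ w : U')) + ((eA a : U')) + hB b := by
    intro w a b
    obtain ⟨h1, h2, h3⟩ := hproj w a b
    rw [hulin_def]
    simp only [LinearMap.add_apply, LinearMap.comp_apply, h1, h2, h3,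
      Submodule.subtype_apply, LinearEquiv.coe_coe]
  have hGu : ∀ x, G (ulin x) = F x := by
    intro x
    obtain ⟨w, a, b, rfl⟩ := hdec x
    rw [hulin]
    rw [map_add, map_add, map_add, map_add]
    have hw : G ((u₀ w : U')) = F (w : U) := hu₀ w
    have ha' : G ((eA a : U')) = 0 := by
      have : ((eA a : U')) ∈ (LinearMap.ker G) := hA'K' (eA a).2
      simpa [LinearMap.mem_ker] using this
    have ha : F (a : U) = 0 := by
      have : (a : U) ∈ LinearMap.ker F := hAK a.2
      simpa [LinearMap.mem_ker] using this
    rw [hw, ha', hGhB b, ha]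
  have hext : ∀ x : W, ulin (x : U) = ((u₀ x : U')) := by
    intro x
    have h := hulin x 0 0
    simpa using h
  have hinj : Function.Injective ulin := by
    rw [← LinearMap.ker_eq_bot, eq_bot_iff]
    intro x hx0
    have hx0 : ulin x = 0 := hx0
    obtain ⟨w, a, b, rfl⟩ := hdec x
    have hFx : F ((w : U) + a + b) = 0 := by
      rw [← hGu _, hx0, map_zero]
    have hxK : ((w : U) + a + b) ∈ LinearMap.ker F := hFx
    have hxWA : ((w : U) + a + b) ∈ W ⊔ A := by
      rw [hWAK]
      exact Submodule.mem_sup_right hxK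
    have hb0 : b = 0 := by
      have h1 : pB ((w : U) + a + b) = 0 :=
        Submodule.projectionOnto_apply_of_mem_right hcB hxWA
      rw [(hproj w a b).2.2] at h1
      exact h1
    subst hb0
    rw [hulin] at hx0
    simp only [map_zero, Submodule.coe_zero, add_zero] at hx0 hFx hxK ⊢
    -- hx0 : ↑(u₀ w) + ↑(eA a) = 0, need hB 0 = 0 handled by map_zero
    have hFw : F (w : U) = 0 := by
      have haK : F (a : U) = 0 := by
        have : (a : U) ∈ LinearMap.ker F := hAK a.2
        simpa [LinearMap.mem_ker] using this
      rw [map_add, haK, add_zero] at hFx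
      exact hFx
    have hu₀wK : ((u₀ w : U')) ∈ W' ⊓ (LinearMap.ker G) := by
      constructor
      · exact (u₀ w).2
      · have : G ((u₀ w : U')) = 0 := by rw [hu₀ w, hFw]
        exact this
    have heAa : ((eA a : U')) ∈ (W' ⊓ (LinearMap.ker G)) ⊓ A' := by
      constructor
      · have : ((eA a : U')) = -((u₀ w : U')) := by
          have := hx0
          linear_combination (norm := abel) this
        rw [this]
        exact Submodule.neg_mem _ hu₀wK
      · exact (eA a).2
    rw [hA1'] at heAa
    have ha0 : (eA a) = 0 := by
      apply Subtype.ext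
      simpa using heAa
    have ha0' : a = 0 := by
      have := congrArg eA.symm ha0
      simpa using this
    subst ha0'
    have hw0 : ((u₀ w : U')) = 0 := by
      simpa using hx0
    have hw0' : w = 0 := by
      have : u₀ w = 0 := Subtype.ext hw0
      have := congrArg u₀.symm this
      simpa using this
    subst hw0'
    simp
  set u := ulin.linearEquivOfInjective hinj hdim with hu
  refine ⟨u, ?_, ?_⟩
  · intro x
    rw [hu, LinearMap.linearEquivOfInjective_apply]
    exact hGu x
  · intro x
    rw [hu, LinearMap.linearEquivOfInjective_apply]
    exact hext x

/-- Flag version: an isomorphism intertwining two maps and carrying a flag of subspaces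
(stabilizing at `⊤` from index `s` on) onto another flag with the same dimensions and images. -/
theorem flag_iso (s : ℕ) :
    ∀ {U U' X : Type v} [AddCommGroup U] [Module 𝕜 U] [FiniteDimensional 𝕜 U]
      [AddCommGroup U'] [Module 𝕜 U'] [FiniteDimensional 𝕜 U']
      [AddCommGroup X] [Module 𝕜 X]
      (F : U →ₗ[𝕜] X) (G : U' →ₗ[𝕜] X),
      finrank 𝕜 U = finrank 𝕜 U' →
      LinearMap.range F = LinearMap.range G →
      ∀ (W : ℕ → Submodule 𝕜 U) (W' : ℕ → Submodule 𝕜 U'),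
      Monotone W → Monotone W' →
      (∀ t, s ≤ t → W t = ⊤) → (∀ t, s ≤ t → W' t = ⊤) →
      (∀ t, finrank 𝕜 ↥(W t) = finrank 𝕜 ↥(W' t)) →
      (∀ t, (W t).map F = (W' t).map G) →
      ∃ u : U ≃ₗ[𝕜] U', (∀ x, G (u x) = F x) ∧
        ∀ t, (W t).map (u.toLinearMap) = W' t := by
  induction s with
  | zero =>
    intro U U' X _ _ _ _ _ _ _ _ F G hdim hrange W W' hWm hW'm htop htop' hfr hmap
    have hbotdim : finrank 𝕜 ↥(⊥ : Submodule 𝕜 U) = finrank 𝕜 ↥(⊥ : Submodule 𝕜 U') := by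
      simp
    have e0 : ↥(⊥ : Submodule 𝕜 U) ≃ₗ[𝕜] ↥(⊥ : Submodule 𝕜 U') :=
      Classical.choice (FiniteDimensional.nonempty_linearEquiv_of_finrank_eq hbotdim)
    obtain ⟨u, huG, huext⟩ := ext_iso F G hdim hrange ⊥ ⊥ e0 (by
      intro x
      have hx : (x : U) ∈ (⊥ : Submodule 𝕜 U) := x.2
      have hex : ((e0 x : U')) ∈ (⊥ : Submodule 𝕜 U') := (e0 x).2
      rw [Submodule.mem_bot] at hx hex
      rw [hx, hex, map_zero, map_zero])
    refine ⟨u, huG, ?_⟩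
    intro t
    rw [htop t (Nat.zero_le t), htop' t (Nat.zero_le t)]
    rw [Submodule.map_top, LinearMap.range_eq_top]
    exact u.surjective
  | succ s IH =>
    intro U U' X _ _ _ _ _ _ _ _ F G hdim hrange W W' hWm hW'm htop htop' hfr hmap
    set R : ℕ → Submodule 𝕜 ↥(W s) := fun t => comap (W s).subtype (W t) with hR
    set R' : ℕ → Submodule 𝕜 ↥(W' s) := fun t => comap (W' s).subtype (W' t) with hR'
    have hrange₀ : LinearMap.range (F.comp (W s).subtype) =
        LinearMap.range (G.comp (W' s).subtype) := by
      rw [LinearMap.range_comp, LinearMap.range_comp, range_subtype, range_subtype]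
      exact hmap s
    obtain ⟨u₀, hu₀G, hu₀flag⟩ := IH (F.comp (W s).subtype) (G.comp (W' s).subtype)
      (hfr s) hrange₀ R R'
      (fun t t' h => comap_mono (hWm h))
      (fun t t' h => comap_mono (hW'm h))
      (fun t ht => comap_subtype_eq_top.mpr (hWm ht))
      (fun t ht => comap_subtype_eq_top.mpr (hW'm ht))
      (by
        intro t
        rcases le_total t s with h | h
        · rw [hR, hR']
          have e1 : finrank 𝕜 ↥(comap (W s).subtype (W t)) = finrank 𝕜 ↥(W t) :=
            (comapSubtypeEquivOfLe (hWm h)).finrank_eq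
          have e2 : finrank 𝕜 ↥(comap (W' s).subtype (W' t)) = finrank 𝕜 ↥(W' t) :=
            (comapSubtypeEquivOfLe (hW'm h)).finrank_eq
          rw [e1, e2]
          exact hfr t
        · have e1 : R t = ⊤ := comap_subtype_eq_top.mpr (hWm h)
          have e2 : R' t = ⊤ := comap_subtype_eq_top.mpr (hW'm h)
          rw [e1, e2, finrank_top, finrank_top]
          exact hfr s)
      (by
        intro t
        rw [hR, hR']
        rw [Submodule.map_comp, Submodule.map_comp, map_comap_subtype, map_comap_subtype]
        rcases le_total t s with h | h
        · rw [inf_eq_right.mpr (hWm h), inf_eq_right.mpr (hW'm h)]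
          exact hmap t
        · rw [inf_eq_left.mpr (hWm h), inf_eq_left.mpr (hW'm h)]
          exact hmap s)
    have hu₀' : ∀ x : ↥(W s), G ((u₀ x : U')) = F ((x : U)) := by
      intro x
      have := hu₀G x
      simpa using this
    obtain ⟨u, huG, huext⟩ := ext_iso F G hdim hrange (W s) (W' s) u₀ hu₀'
    refine ⟨u, huG, ?_⟩
    intro t
    rcases le_or_gt t s with h | h
    · have hWt : (W t) = (R t).map (W s).subtype := by
        rw [hR, map_comap_subtype]
        exact (inf_eq_right.mpr (hWm h)).symm
      have hW't : (W' t) = (R' t).map (W' s).subtype := by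
        rw [hR', map_comap_subtype]
        exact (inf_eq_right.mpr (hW'm h)).symm
      have hcomm : u.toLinearMap.comp (W s).subtype =
          (W' s).subtype.comp (u₀ : ↥(W s) →ₗ[𝕜] ↥(W' s)) := by
        apply LinearMap.ext
        intro x
        simpa using huext x
      calc (W t).map u.toLinearMap
          = ((R t).map (W s).subtype).map u.toLinearMap := by rw [← hWt]
        _ = (R t).map (u.toLinearMap.comp (W s).subtype) := by
            rw [Submodule.map_comp]
        _ = (R t).map ((W' s).subtype.comp (u₀ : ↥(W s) →ₗ[𝕜] ↥(W' s))) := by rw [hcomm]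
        _ = ((R t).map (u₀ : ↥(W s) →ₗ[𝕜] ↥(W' s))).map (W' s).subtype := by
            rw [Submodule.map_comp]
        _ = (R' t).map (W' s).subtype := by rw [hu₀flag t]
        _ = W' t := hW't.symm
    · rw [htop t h, htop' t h]
      rw [Submodule.map_top, LinearMap.range_eq_top]
      exact u.surjective

variable (𝕜) in
/-- Transport along an equality of indices. -/
def vc (n : ℕ → ℕ) {a b : ℕ} (h : a = b) :
    (Fin (n a) → 𝕜) ≃ₗ[𝕜] (Fin (n b) → 𝕜) :=
  LinearEquiv.funCongrLeft 𝕜 𝕜 (finCongr (congrArg n h.symm))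

@[simp] theorem vc_rfl (n : ℕ → ℕ) {a : ℕ} (h : a = a) :
    vc 𝕜 n h = LinearEquiv.refl 𝕜 (Fin (n a) → 𝕜) := by
  ext x i
  rfl

variable (𝕜) in
/-- Composite `f j ∘ f (j+1) ∘ ⋯ ∘ f (j+m)` of a chain of linear maps. -/
def lcomp (n : ℕ → ℕ) (f : ∀ i : ℕ, (Fin (n (i + 1)) → 𝕜) →ₗ[𝕜] (Fin (n i) → 𝕜)) :
    (j m : ℕ) → ((Fin (n (j + m + 1)) → 𝕜) →ₗ[𝕜] (Fin (n j) → 𝕜))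
  | j, 0 => f j
  | j, m + 1 => (lcomp n f j m).comp (f (j + m + 1))

theorem vc_comp_f (n : ℕ → ℕ) (f : ∀ i : ℕ, (Fin (n (i + 1)) → 𝕜) →ₗ[𝕜] (Fin (n i) → 𝕜))
    {a b : ℕ} (h : a = b) :
    (vc 𝕜 n h.symm).toLinearMap.comp (f b) =
      (f a).comp (vc 𝕜 n (congrArg Nat.succ h).symm).toLinearMap := by
  subst h
  simp only [vc_rfl]
  ext x
  rfl

theorem lcomp_zero_cast (n : ℕ → ℕ) (f : ∀ i : ℕ, (Fin (n (i + 1)) → 𝕜) →ₗ[𝕜] (Fin (n i) → 𝕜))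
    (c : ℕ) (h : c + 0 + 1 = c + 1) :
    (lcomp 𝕜 n f c 0).comp (vc 𝕜 n h.symm).toLinearMap = f c := by
  ext x
  rfl

theorem mul_units_cancel {P Q R : Type*} [Fintype Q] [DecidableEq Q]
    (X : Matrix P Q 𝕜) (u : (Matrix Q Q 𝕜)ˣ) (Y : Matrix Q R 𝕜) :
    X * (↑u⁻¹ : Matrix Q Q 𝕜) * ((↑u : Matrix Q Q 𝕜) * Y) = X * Y := by
  rw [Matrix.mul_assoc X (↑u⁻¹ : Matrix Q Q 𝕜) _, ← Matrix.mul_assoc (↑u⁻¹ : Matrix Q Q 𝕜) _ Y,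
    Units.inv_mul, Matrix.one_mul]

theorem main_ind (n : ℕ → ℕ) (c : ℕ) :
    ∀ (f f' : ∀ i : ℕ, (Fin (n (i + 1)) → 𝕜) →ₗ[𝕜] (Fin (n i) → 𝕜)),
    (∀ j m, j + m + 1 ≤ c →
      finrank 𝕜 ↥(LinearMap.range (lcomp 𝕜 n f j m)) =
        finrank 𝕜 ↥(LinearMap.range (lcomp 𝕜 n f' j m))) →
    ∀ (s : ℕ) (W W' : ℕ → Submodule 𝕜 (Fin (n c) → 𝕜)),
    Monotone W → Monotone W' →
    (∀ t, s ≤ t → W t = W s) → (∀ t, s ≤ t → W' t = W' s) →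
    (∀ t, finrank 𝕜 ↥(W t) = finrank 𝕜 ↥(W' t)) →
    (∀ j m (h : j + m + 1 = c) t,
      finrank 𝕜 ↥((W t).map ((lcomp 𝕜 n f j m).comp (vc 𝕜 n h.symm).toLinearMap)) =
        finrank 𝕜 ↥((W' t).map ((lcomp 𝕜 n f' j m).comp (vc 𝕜 n h.symm).toLinearMap))) →
    ∃ g : ∀ i : ℕ, ((Fin (n i) → 𝕜) ≃ₗ[𝕜] (Fin (n i) → 𝕜)),
      (∀ i, i + 1 ≤ c →
        f' i = ((g i).toLinearMap.comp (f i)).comp (g (i + 1)).symm.toLinearMap) ∧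
      (∀ t, (W t).map (g c).toLinearMap = W' t) := by
  induction c with
  | zero =>
    intro f f' hrank s W W' hWm hW'm hWs hW's hfr hmap
    set W₁ : ℕ → Submodule 𝕜 (Fin (n 0) → 𝕜) := fun t => if t ≤ s then W t else ⊤ with hW₁
    set W₁' : ℕ → Submodule 𝕜 (Fin (n 0) → 𝕜) := fun t => if t ≤ s then W' t else ⊤ with hW₁'
    have hmono : Monotone W₁ := by
      intro t t' htt
      rw [hW₁]
      by_cases h1 : t ≤ s
      · by_cases h2 : t' ≤ s
        · simpa [h1, h2] using hWm htt
        · simp [h1, h2]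
      · have h2 : ¬ t' ≤ s := fun hc => h1 (htt.trans hc)
        simp [h1, h2]
    have hmono' : Monotone W₁' := by
      intro t t' htt
      rw [hW₁']
      by_cases h1 : t ≤ s
      · by_cases h2 : t' ≤ s
        · simpa [h1, h2] using hW'm htt
        · simp [h1, h2]
      · have h2 : ¬ t' ≤ s := fun hc => h1 (htt.trans hc)
        simp [h1, h2]
    obtain ⟨u, -, huflag⟩ := flag_iso (s + 1)
      (0 : (Fin (n 0) → 𝕜) →ₗ[𝕜] (Fin (n 0) → 𝕜))
      (0 : (Fin (n 0) → 𝕜) →ₗ[𝕜] (Fin (n 0) → 𝕜)) rfl rfl W₁ W₁' hmono hmono'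
      (fun t ht => by rw [hW₁]; simp only; rw [if_neg (by omega)])
      (fun t ht => by rw [hW₁']; simp only; rw [if_neg (by omega)])
      (fun t => by
        rw [hW₁, hW₁']
        simp only
        by_cases h1 : t ≤ s
        · beta_reduce; rw [if_pos h1, if_pos h1]
          exact hfr t
        · beta_reduce; rw [if_neg h1, if_neg h1])
      (fun t => by rw [Submodule.map_zero, Submodule.map_zero])
    refine ⟨Function.update (fun i => LinearEquiv.refl 𝕜 (Fin (n i) → 𝕜)) 0 u, ?_, ?_⟩
    · intro i hi
      omega
    · intro t
      have hg0 : Function.update (fun i => LinearEquiv.refl 𝕜 (Fin (n i) → 𝕜)) 0 u 0 = u :=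
        Function.update_self (β := fun i => (Fin (n i) → 𝕜) ≃ₗ[𝕜] (Fin (n i) → 𝕜)) 0 u (fun i => LinearEquiv.refl 𝕜 (Fin (n i) → 𝕜))
      rw [hg0]
      rcases le_or_gt t s with h | h
      · have := huflag t
        rw [hW₁, hW₁'] at this
        simpa [h] using this
      · rw [hWs t h.le, hW's t h.le]
        have := huflag s
        rw [hW₁, hW₁'] at this
        simpa using this
  | succ c IH =>
    intro f f' hrank s W W' hWm hW'm hWs hW's hfr hmap
    set Z : ℕ → Submodule 𝕜 (Fin (n c) → 𝕜) :=
      fun t => if t ≤ s then (W t).map (f c) else LinearMap.range (f c) with hZ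
    set Z' : ℕ → Submodule 𝕜 (Fin (n c) → 𝕜) :=
      fun t => if t ≤ s then (W' t).map (f' c) else LinearMap.range (f' c) with hZ'
    have hZmono : Monotone Z := by
      intro t t' htt
      rw [hZ]
      by_cases h1 : t ≤ s
      · by_cases h2 : t' ≤ s
        · simpa [h1, h2] using Submodule.map_mono (hWm htt)
        · simpa [h1, h2] using LinearMap.map_le_range
      · have h2 : ¬ t' ≤ s := fun hc => h1 (htt.trans hc)
        simp [h1, h2]
    have hZmono' : Monotone Z' := by
      intro t t' htt
      rw [hZ']
      by_cases h1 : t ≤ s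
      · by_cases h2 : t' ≤ s
        · simpa [h1, h2] using Submodule.map_mono (hW'm htt)
        · simpa [h1, h2] using LinearMap.map_le_range
      · have h2 : ¬ t' ≤ s := fun hc => h1 (htt.trans hc)
        simp [h1, h2]
    obtain ⟨g, hconj, hflag⟩ := IH f f' (fun j m hm => hrank j m (by omega)) (s + 1) Z Z'
      hZmono hZmono'
      (fun t ht => by
        rw [hZ]; simp only
        rw [if_neg (by omega), if_neg (by omega)])
      (fun t ht => by
        rw [hZ']; simp only
        rw [if_neg (by omega), if_neg (by omega)])
      (by
        intro t
        rw [hZ, hZ']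
        simp only
        by_cases h1 : t ≤ s
        · beta_reduce; rw [if_pos h1, if_pos h1]
          have := hmap c 0 rfl t
          rw [lcomp_zero_cast n f c rfl, lcomp_zero_cast n f' c rfl] at this
          exact this
        · beta_reduce; rw [if_neg h1, if_neg h1]
          exact hrank c 0 (le_refl (c + 1)))
      (by
        intro j m h t
        have h₂ : j + (m + 1) + 1 = c + 1 := by omega
        have hcast : ((lcomp 𝕜 n f j m).comp (vc 𝕜 n h.symm).toLinearMap).comp (f c) =
            (lcomp 𝕜 n f j (m + 1)).comp (vc 𝕜 n h₂.symm).toLinearMap := by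
          rw [LinearMap.comp_assoc, vc_comp_f n f h, ← LinearMap.comp_assoc]
          rfl
        have hcast' : ((lcomp 𝕜 n f' j m).comp (vc 𝕜 n h.symm).toLinearMap).comp (f' c) =
            (lcomp 𝕜 n f' j (m + 1)).comp (vc 𝕜 n h₂.symm).toLinearMap := by
          rw [LinearMap.comp_assoc, vc_comp_f n f' h, ← LinearMap.comp_assoc]
          rfl
        rw [hZ, hZ']
        simp only
        by_cases h1 : t ≤ s
        · beta_reduce; rw [if_pos h1, if_pos h1]
          rw [← Submodule.map_comp, ← Submodule.map_comp, hcast, hcast']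
          exact hmap j (m + 1) h₂ t
        · beta_reduce; rw [if_neg h1, if_neg h1]
          rw [← LinearMap.range_comp, ← LinearMap.range_comp, hcast, hcast']
          rw [LinearMap.range_comp_of_range_eq_top _ (LinearEquiv.range _),
            LinearMap.range_comp_of_range_eq_top _ (LinearEquiv.range _)]
          exact hrank j (m + 1) (by omega))
    have hrangeF : LinearMap.range ((g c).toLinearMap.comp (f c)) =
        LinearMap.range (f' c) := by
      rw [LinearMap.range_comp]
      have := hflag (s + 1)
      rw [hZ, hZ'] at this
      simpa using this
    set W₁ : ℕ → Submodule 𝕜 (Fin (n (c + 1)) → 𝕜) :=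
      fun t => if t ≤ s then W t else ⊤ with hW₁
    set W₁' : ℕ → Submodule 𝕜 (Fin (n (c + 1)) → 𝕜) :=
      fun t => if t ≤ s then W' t else ⊤ with hW₁'
    have hmono : Monotone W₁ := by
      intro t t' htt
      rw [hW₁]
      by_cases h1 : t ≤ s
      · by_cases h2 : t' ≤ s
        · simpa [h1, h2] using hWm htt
        · simp [h1, h2]
      · have h2 : ¬ t' ≤ s := fun hc => h1 (htt.trans hc)
        simp [h1, h2]
    have hmono' : Monotone W₁' := by
      intro t t' htt
      rw [hW₁']
      by_cases h1 : t ≤ s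
      · by_cases h2 : t' ≤ s
        · simpa [h1, h2] using hW'm htt
        · simp [h1, h2]
      · have h2 : ¬ t' ≤ s := fun hc => h1 (htt.trans hc)
        simp [h1, h2]
    obtain ⟨u, huG, huflag⟩ := flag_iso (s + 1) ((g c).toLinearMap.comp (f c)) (f' c)
      rfl hrangeF W₁ W₁' hmono hmono'
      (fun t ht => by rw [hW₁]; simp only; rw [if_neg (by omega)])
      (fun t ht => by rw [hW₁']; simp only; rw [if_neg (by omega)])
      (fun t => by
        rw [hW₁, hW₁']
        simp only
        by_cases h1 : t ≤ s
        · beta_reduce; rw [if_pos h1, if_pos h1]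
          exact hfr t
        · beta_reduce; rw [if_neg h1, if_neg h1])
      (by
        intro t
        rw [hW₁, hW₁']
        simp only
        by_cases h1 : t ≤ s
        · rw [if_pos h1, if_pos h1]
          have := hflag t
          rw [hZ, hZ'] at this
          simp only [if_pos h1] at this
          rw [Submodule.map_comp, this]
        · rw [if_neg h1, if_neg h1]
          rw [Submodule.map_top, Submodule.map_top]
          exact hrangeF)
    refine ⟨Function.update g (c + 1) u, ?_, ?_⟩
    · intro i hi
      rcases Nat.lt_or_ge i c with h | h
      · have e1 : Function.update g (c + 1) u i = g i :=
          Function.update_of_ne (β := fun i => (Fin (n i) → 𝕜) ≃ₗ[𝕜] (Fin (n i) → 𝕜)) (show i ≠ c + 1 by omega) u g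
        have e2 : Function.update g (c + 1) u (i + 1) = g (i + 1) :=
          Function.update_of_ne (β := fun i => (Fin (n i) → 𝕜) ≃ₗ[𝕜] (Fin (n i) → 𝕜)) (show i + 1 ≠ c + 1 by omega) u g
        rw [e1, e2]
        exact hconj i (by omega)
      · have hic : i = c := by omega
        subst hic
        have e1 : Function.update g (i + 1) u i = g i :=
          Function.update_of_ne (β := fun i => (Fin (n i) → 𝕜) ≃ₗ[𝕜] (Fin (n i) → 𝕜)) (show i ≠ i + 1 by omega) u g
        have e2 : Function.update g (i + 1) u (i + 1) = u :=
          Function.update_self (β := fun i => (Fin (n i) → 𝕜) ≃ₗ[𝕜] (Fin (n i) → 𝕜)) (i + 1) u g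
        rw [e1, e2]
        apply LinearMap.ext
        intro x
        have h1 : f' i x = f' i (u (u.symm x)) := by rw [u.apply_symm_apply]
        rw [h1, huG (u.symm x)]
        rfl
    · intro t
      have e2 : Function.update g (c + 1) u (c + 1) = u :=
        Function.update_self (β := fun i => (Fin (n i) → 𝕜) ≃ₗ[𝕜] (Fin (n i) → 𝕜)) (c + 1) u g
      rw [e2]
      rcases le_or_gt t s with h | h
      · have := huflag t
        rw [hW₁, hW₁'] at this
        simpa [h] using this
      · rw [hWs t h.le, hW's t h.le]
        have := huflag s
        rw [hW₁, hW₁'] at this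
        simpa using this

end ChainAux

theorem chain_conjugate_iff_rank_eq
    (𝕜 : Type*) [Field 𝕜] (k : ℕ) (hk : 2 ≤ k)
    (n : ℕ → ℕ) (hn : ∀ i, i < k → 0 < n i)
    (N N' : ∀ i : ℕ, Matrix (Fin (n i)) (Fin (n (i + 1))) 𝕜) :
    (∃ g : ∀ i : ℕ, GL (Fin (n i)) 𝕜,
        ∀ i : ℕ, i + 1 ≤ k - 1 →
          N' i = (g i : Matrix (Fin (n i)) (Fin (n i)) 𝕜) * N i *
            (((g (i + 1))⁻¹ : GL (Fin (n (i + 1))) 𝕜) :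
              Matrix (Fin (n (i + 1))) (Fin (n (i + 1))) 𝕜)) ↔
    (∀ j m : ℕ, j + m + 1 ≤ k - 1 →
        (chainProd n N j m).rank = (chainProd n N' j m).rank) := by
  constructor
  · rintro ⟨g, hg⟩ j m hjm
    have key : ∀ m j, j + m + 1 ≤ k - 1 →
        chainProd n N' j m = (g j : Matrix (Fin (n j)) (Fin (n j)) 𝕜) * chainProd n N j m *
          (((g (j + m + 1))⁻¹ : GL (Fin (n (j + m + 1))) 𝕜) :
            Matrix (Fin (n (j + m + 1))) (Fin (n (j + m + 1))) 𝕜) := by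
      intro m
      induction m with
      | zero => intro j hj; exact hg j hj
      | succ m ih =>
        intro j hj
        have h1 := ih j (by omega)
        have h2 := hg (j + m + 1) (by omega)
        rw [chainProd_succ, chainProd_succ, h1, h2,
          Matrix.mul_assoc ((g (j + m + 1) : Matrix (Fin (n (j + m + 1))) (Fin (n (j + m + 1))) 𝕜))
            (N (j + m + 1)) _,
          ChainAux.mul_units_cancel]
        simp only [Matrix.mul_assoc]
        rfl
    rw [key m j hjm,
      Matrix.rank_mul_eq_left_of_isUnit_det _ _
        ((Matrix.isUnit_iff_isUnit_det _).mp ((g (j + m + 1))⁻¹).isUnit),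
      Matrix.rank_mul_eq_right_of_isUnit_det _ _
        ((Matrix.isUnit_iff_isUnit_det _).mp (g j).isUnit)]
  · intro h
    have hcomp : ∀ (M : ∀ i : ℕ, Matrix (Fin (n i)) (Fin (n (i + 1))) 𝕜) (j m : ℕ),
        (chainProd n M j m).mulVecLin =
          ChainAux.lcomp 𝕜 n (fun i => (M i).mulVecLin) j m := by
      intro M j m
      induction m with
      | zero => rfl
      | succ m ih =>
        rw [chainProd_succ, Matrix.mulVecLin_mul, ih]
        rfl
    have hrank' : ∀ j m, j + m + 1 ≤ k - 1 →
        Module.finrank 𝕜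
            ↥(LinearMap.range (ChainAux.lcomp 𝕜 n (fun i => (N i).mulVecLin) j m)) =
          Module.finrank 𝕜
            ↥(LinearMap.range (ChainAux.lcomp 𝕜 n (fun i => (N' i).mulVecLin) j m)) := by
      intro j m hm
      rw [← hcomp, ← hcomp]
      exact h j m hm
    obtain ⟨g, hconj, -⟩ := ChainAux.main_ind n (k - 1)
      (fun i => (N i).mulVecLin) (fun i => (N' i).mulVecLin) hrank' 0
      (fun _ => ⊥) (fun _ => ⊥) monotone_const monotone_const
      (fun _ _ => rfl) (fun _ _ => rfl) (fun _ => rfl)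
      (fun j m hh t => by rw [Submodule.map_bot, Submodule.map_bot])
    have mk1 : ∀ i, LinearMap.toMatrix' (g i).toLinearMap *
        LinearMap.toMatrix' (g i).symm.toLinearMap = 1 := by
      intro i
      rw [← LinearMap.toMatrix'_comp]
      have e : (g i).toLinearMap ∘ₗ (g i).symm.toLinearMap =
          (LinearMap.id : (Fin (n i) → 𝕜) →ₗ[𝕜] (Fin (n i) → 𝕜)) := by
        apply LinearMap.ext
        intro x
        simp
      rw [e, LinearMap.toMatrix'_id]
    have mk2 : ∀ i, LinearMap.toMatrix' (g i).symm.toLinearMap *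
        LinearMap.toMatrix' (g i).toLinearMap = 1 := by
      intro i
      rw [← LinearMap.toMatrix'_comp]
      have e : (g i).symm.toLinearMap ∘ₗ (g i).toLinearMap =
          (LinearMap.id : (Fin (n i) → 𝕜) →ₗ[𝕜] (Fin (n i) → 𝕜)) := by
        apply LinearMap.ext
        intro x
        simp
      rw [e, LinearMap.toMatrix'_id]
    refine ⟨fun i => ⟨LinearMap.toMatrix' (g i).toLinearMap,
      LinearMap.toMatrix' (g i).symm.toLinearMap, mk1 i, mk2 i⟩, ?_⟩
    intro i hi
    have hc := hconj i hi
    beta_reduce at hc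
    have hM : ∀ (a b : ℕ) (M : Matrix (Fin (n a)) (Fin (n b)) 𝕜),
        LinearMap.toMatrix' M.mulVecLin = M := by
      intro a b M
      rw [← Matrix.toLin'_apply', LinearMap.toMatrix'_toLin']
    show N' i = LinearMap.toMatrix' (g i).toLinearMap * N i *
      LinearMap.toMatrix' (g (i + 1)).symm.toLinearMap
    rw [← hM _ _ (N' i), hc, LinearMap.toMatrix'_comp, LinearMap.toMatrix'_comp,
      hM _ _ (N i)]
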